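/- Let (X_n) converge in distribution to a non-null nonnegative X_∞, with 0 < λ₀ < min(λ_{X_n}, λ_{X_∞}) for n large, and E[X_n^{λ₀}] → E[X_∞^{λ₀}]. Then for every λ ∈ [0, λ₀], the size-biased variables (X_n)_{(λ)} converge in distribution to (X_∞)_{(λ)}. -/

import Mathlib

open MeasureTheory Set Filter
open scoped ENNReal NNReal Topology

private lemma rpow_le_one_add {y t s : ℝ} (hy : 0 ≤ y) (ht : 0 ≤ t) (hts : t ≤ s) :
    y ^ t ≤ 1 + y ^ s := by
  rcases le_total y 1 with h | h
  · have h1 := Real.rpow_le_one hy h ht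
    have h2 := Real.rpow_nonneg hy s
    linarith
  · have h1 := Real.rpow_le_rpow_of_exponent_le h hts
    have h2 : (0:ℝ) ≤ y ^ s := Real.rpow_nonneg hy s
    linarith

/-- Truncation lemma: weak convergence plus convergence of `g`-moments gives
convergence of `f*g` integrals for bounded continuous `f`. -/
private lemma trunc_lemma (ν : ℕ → Measure ℝ) (νi : Measure ℝ)
    [∀ n, IsProbabilityMeasure (ν n)] [IsProbabilityMeasure νi]
    (g : ℝ → ℝ) (hgc : Continuous g) (hg0 : ∀ x, 0 ≤ g x)
    (hgi : Integrable g νi) (hgn : ∀ᶠ n in atTop, Integrable g (ν n))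
    (hweak : ∀ F : BoundedContinuousFunction ℝ ℝ,
      Tendsto (fun n => ∫ x, F x ∂(ν n)) atTop (𝓝 (∫ x, F x ∂νi)))
    (hmomg : Tendsto (fun n => ∫ x, g x ∂(ν n)) atTop (𝓝 (∫ x, g x ∂νi)))
    (f : ℝ → ℝ) (hfc : Continuous f) (C : ℝ) (hC : 0 ≤ C) (hfb : ∀ x, |f x| ≤ C) :
    Tendsto (fun n => ∫ x, f x * g x ∂(ν n)) atTop (𝓝 (∫ x, f x * g x ∂νi)) := by
  rw [Metric.tendsto_nhds]
  intro ε hε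
  set ε' : ℝ := ε / (2 * C + 2) with hε'def
  have hε' : 0 < ε' := by positivity
  -- truncated functions as bounded continuous functions
  have hGk : ∀ k : ℕ, ∃ G : BoundedContinuousFunction ℝ ℝ, ⇑G = fun x => min (g x) k := by
    intro k
    refine ⟨BoundedContinuousFunction.ofNormedAddCommGroup (fun x => min (g x) k)
      (hgc.min continuous_const) k (fun x => ?_), rfl⟩
    rw [Real.norm_eq_abs, abs_le]
    constructor
    · have h0 : (0:ℝ) ≤ min (g x) k := le_min (hg0 x) (Nat.cast_nonneg k)
      have h1 : (0:ℝ) ≤ (k:ℝ) := Nat.cast_nonneg k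
      linarith
    · exact min_le_right _ _
  -- monotone convergence to pick a truncation level
  have hmono : ∀ x : ℝ, Monotone fun k : ℕ => min (g x) k := fun x k m hkm =>
    min_le_min le_rfl (Nat.cast_le.mpr hkm)
  have htend : ∀ x : ℝ, Tendsto (fun k : ℕ => min (g x) k) atTop (𝓝 (g x)) := by
    intro x
    have hev : ∀ᶠ k : ℕ in atTop, min (g x) (k:ℝ) = g x := by
      filter_upwards [eventually_ge_atTop ⌈g x⌉₊] with k hk
      exact min_eq_left ((Nat.le_ceil _).trans (by exact_mod_cast hk))
    exact Tendsto.congr' (by filter_upwards [hev] with k hk using hk.symm) tendsto_const_nhds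
  obtain ⟨Gint⟩ : Nonempty (∀ k : ℕ, Integrable (fun x => min (g x) (k:ℝ)) νi) := by
    refine ⟨fun k => ?_⟩
    obtain ⟨G, hG⟩ := hGk k
    simpa [hG] using G.integrable νi
  have hMCT := integral_tendsto_of_tendsto_of_monotone Gint hgi
    (ae_of_all _ hmono) (ae_of_all _ htend)
  obtain ⟨k, hk⟩ := (hMCT.eventually (eventually_gt_nhds
    (sub_lt_self (∫ x, g x ∂νi) hε'))).exists
  obtain ⟨G, hG⟩ := hGk k
  -- key bound lemma
  have key : ∀ ρ : Measure ℝ, Integrable g ρ → Integrable (fun x => min (g x) (k:ℝ)) ρ →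
      |∫ x, f x * g x ∂ρ - ∫ x, f x * min (g x) (k:ℝ) ∂ρ| ≤
        C * (∫ x, g x ∂ρ - ∫ x, min (g x) (k:ℝ) ∂ρ) := by
    intro ρ hρg hρk
    have hfg : Integrable (fun x => f x * g x) ρ :=
      hρg.bdd_mul hfc.aestronglyMeasurable (ae_of_all _ fun x => by simpa [Real.norm_eq_abs] using hfb x)
    have hfk : Integrable (fun x => f x * min (g x) (k:ℝ)) ρ :=
      hρk.bdd_mul hfc.aestronglyMeasurable (ae_of_all _ fun x => by simpa [Real.norm_eq_abs] using hfb x)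
    rw [← integral_sub hfg hfk, ← integral_sub hρg hρk]
    have habs : |∫ x, (f x * g x - f x * min (g x) (k:ℝ)) ∂ρ| ≤
        ∫ x, |f x * g x - f x * min (g x) (k:ℝ)| ∂ρ := by
      simpa [Real.norm_eq_abs] using norm_integral_le_integral_norm
        (fun x => f x * g x - f x * min (g x) (k:ℝ)) (μ := ρ)
    refine habs.trans ?_
    rw [← integral_const_mul]
    refine integral_mono (hfg.sub hfk).abs ((hρg.sub hρk).const_mul C) fun x => ?_
    have h1 : |f x * g x - f x * min (g x) (k:ℝ)| = |f x| * (g x - min (g x) (k:ℝ)) := by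
      rw [← mul_sub, abs_mul, abs_of_nonneg (sub_nonneg.mpr (min_le_left _ _))]
    rw [h1]
    exact mul_le_mul_of_nonneg_right (hfb x) (sub_nonneg.mpr (min_le_left _ _))
  -- the bounded continuous function f * G
  obtain ⟨H, hH⟩ : ∃ H : BoundedContinuousFunction ℝ ℝ, ⇑H = fun x => f x * min (g x) k := by
    refine ⟨BoundedContinuousFunction.ofNormedAddCommGroup (fun x => f x * min (g x) k)
      (hfc.mul (hgc.min continuous_const)) (C * k) (fun x => ?_), rfl⟩
    rw [Real.norm_eq_abs, abs_mul]
    have h0 : (0:ℝ) ≤ min (g x) k := le_min (hg0 x) (Nat.cast_nonneg k)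
    have h1 : |min (g x) (k:ℝ)| ≤ k := by rw [abs_of_nonneg h0]; exact min_le_right _ _
    exact mul_le_mul (hfb x) h1 (abs_nonneg _) hC
  have hA := hweak H
  have hB := hweak G
  rw [hH] at hA
  rw [hG] at hB
  have hr : Tendsto (fun n => ∫ x, g x ∂(ν n) - ∫ x, min (g x) (k:ℝ) ∂(ν n)) atTop
      (𝓝 (∫ x, g x ∂νi - ∫ x, min (g x) (k:ℝ) ∂νi)) := hmomg.sub hB
  have hrlim : ∫ x, g x ∂νi - ∫ x, min (g x) (k:ℝ) ∂νi < ε' := by linarith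
  filter_upwards [hgn, hA.eventually (eventually_abs_sub_lt _ hε'),
    hr.eventually (eventually_lt_nhds hrlim)] with n hint hAn hrn
  have hνik := Gint k
  have hνnk : Integrable (fun x => min (g x) (k:ℝ)) (ν n) := by
    simpa [hG] using G.integrable (ν n)
  have k1 := key (ν n) hint hνnk
  have k2 := key νi hgi hνik
  have hr0 : 0 ≤ ∫ x, g x ∂νi - ∫ x, min (g x) (k:ℝ) ∂νi :=
    sub_nonneg.mpr (integral_mono hνik hgi fun x => min_le_left _ _)
  rw [Real.dist_eq]
  have tri : |∫ x, f x * g x ∂(ν n) - ∫ x, f x * g x ∂νi| ≤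
      |∫ x, f x * g x ∂(ν n) - ∫ x, f x * min (g x) (k:ℝ) ∂(ν n)| +
      |∫ x, f x * min (g x) (k:ℝ) ∂(ν n) - ∫ x, f x * min (g x) (k:ℝ) ∂νi| +
      |∫ x, f x * min (g x) (k:ℝ) ∂νi - ∫ x, f x * g x ∂νi| := by
    have := abs_sub_le (∫ x, f x * g x ∂(ν n)) (∫ x, f x * min (g x) (k:ℝ) ∂(ν n))
      (∫ x, f x * g x ∂νi)
    have := abs_sub_le (∫ x, f x * min (g x) (k:ℝ) ∂(ν n)) (∫ x, f x * min (g x) (k:ℝ) ∂νi)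
      (∫ x, f x * g x ∂νi)
    linarith
  have k2' : |∫ x, f x * min (g x) (k:ℝ) ∂νi - ∫ x, f x * g x ∂νi| ≤
      C * (∫ x, g x ∂νi - ∫ x, min (g x) (k:ℝ) ∂νi) := by rw [abs_sub_comm]; exact k2
  have hb1 : C * (∫ x, g x ∂(ν n) - ∫ x, min (g x) (k:ℝ) ∂(ν n)) ≤ C * ε' :=
    mul_le_mul_of_nonneg_left hrn.le hC
  have hb2 : C * (∫ x, g x ∂νi - ∫ x, min (g x) (k:ℝ) ∂νi) ≤ C * ε' :=
    mul_le_mul_of_nonneg_left hrlim.le hC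
  have hεcalc : ε' * (2 * C + 2) = ε := by
    rw [hε'def, div_mul_cancel₀]; positivity
  nlinarith [hAn, k1, tri]

private lemma ae_nonneg_of_null (ρ : Measure ℝ) (hsupp : ρ {x : ℝ | x < 0} = 0) :
    ∀ᵐ x ∂ρ, 0 ≤ x := by
  rw [ae_iff]
  simpa [not_le] using hsupp

private lemma ofReal_rpow_ae_eq (ρ : Measure ℝ) (hsupp : ρ {x : ℝ | x < 0} = 0) (t : ℝ) :
    (fun x => ENNReal.ofReal (x ^ t)) =ᵐ[ρ] fun x => ENNReal.ofReal ((max x 0) ^ t) := by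
  filter_upwards [ae_nonneg_of_null ρ hsupp] with x hx
  rw [max_eq_left hx]

private lemma moment_facts (ρ : Measure ℝ) [IsProbabilityMeasure ρ]
    (hsupp : ρ {x : ℝ | x < 0} = 0) {t s : ℝ} (ht : 0 ≤ t) (hts : t ≤ s)
    (hs : ∫⁻ x, ENNReal.ofReal (x ^ s) ∂ρ < ⊤) :
    (∫⁻ x, ENNReal.ofReal (x ^ t) ∂ρ ≠ ⊤) ∧ Integrable (fun x => (max x 0) ^ t) ρ ∧
      ∫ x, (max x 0) ^ t ∂ρ = (∫⁻ x, ENNReal.ofReal (x ^ t) ∂ρ).toReal := by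
  have hmble : ∀ u : ℝ, Measurable fun x : ℝ => ENNReal.ofReal ((max x 0) ^ u) := by
    intro u; fun_prop
  have key : ∫⁻ x, ENNReal.ofReal ((max x 0) ^ t) ∂ρ ≠ ⊤ := by
    have hle : ∫⁻ x, ENNReal.ofReal ((max x 0) ^ t) ∂ρ ≤
        ∫⁻ x, (1 + ENNReal.ofReal ((max x 0) ^ s)) ∂ρ := by
      refine lintegral_mono fun x => ?_
      have hb := rpow_le_one_add (le_max_right x 0) ht hts
      calc ENNReal.ofReal ((max x 0) ^ t) ≤ ENNReal.ofReal (1 + (max x 0) ^ s) :=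
            ENNReal.ofReal_le_ofReal hb
        _ = 1 + ENNReal.ofReal ((max x 0) ^ s) := by
            rw [ENNReal.ofReal_add zero_le_one (Real.rpow_nonneg (le_max_right x 0) s),
              ENNReal.ofReal_one]
    have heq : ∫⁻ x, ENNReal.ofReal ((max x 0) ^ s) ∂ρ = ∫⁻ x, ENNReal.ofReal (x ^ s) ∂ρ :=
      lintegral_congr_ae (ofReal_rpow_ae_eq ρ hsupp s).symm
    have : ∫⁻ x, (1 + ENNReal.ofReal ((max x 0) ^ s)) ∂ρ =
        1 + ∫⁻ x, ENNReal.ofReal ((max x 0) ^ s) ∂ρ := by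
      rw [lintegral_add_left measurable_const, lintegral_const, measure_univ, mul_one]
    refine (lt_of_le_of_lt hle ?_).ne
    rw [this, heq]
    exact ENNReal.add_lt_top.mpr ⟨ENNReal.one_lt_top, hs⟩
  have keyt : ∫⁻ x, ENNReal.ofReal (x ^ t) ∂ρ ≠ ⊤ := by
    rw [lintegral_congr_ae (ofReal_rpow_ae_eq ρ hsupp t)]; exact key
  have hint : Integrable (fun x => (max x 0) ^ t) ρ := by
    have := integrable_toReal_of_lintegral_ne_top (hmble t).aemeasurable key
    refine this.congr (ae_of_all _ fun x => ?_)
    exact ENNReal.toReal_ofReal (Real.rpow_nonneg (le_max_right x 0) t)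
  refine ⟨keyt, hint, ?_⟩
  have h1 : ∫ x, (max x 0) ^ t ∂ρ = ∫ x, (ENNReal.ofReal ((max x 0) ^ t)).toReal ∂ρ := by
    refine integral_congr_ae (ae_of_all _ fun x => ?_)
    exact (ENNReal.toReal_ofReal (Real.rpow_nonneg (le_max_right x 0) t)).symm
  rw [h1, integral_toReal (hmble t).aemeasurable (ae_of_all _ fun x => ENNReal.ofReal_lt_top),
    lintegral_congr_ae (ofReal_rpow_ae_eq ρ hsupp t)]

/-- The size-biased law of order `t` of a distribution `μ` on `ℝ`. -/
noncomputable def sizeBiased (μ : MeasureTheory.Measure ℝ) (t : ℝ) :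
    MeasureTheory.Measure ℝ :=
  (∫⁻ x, ENNReal.ofReal (x ^ t) ∂μ)⁻¹ •
    μ.withDensity fun x => ENNReal.ofReal (x ^ t)

private lemma sizeBiased_integral (ρ : Measure ℝ) (hsupp : ρ {x : ℝ | x < 0} = 0)
    (t : ℝ) (F : ℝ → ℝ) :
    ∫ x, F x ∂(sizeBiased ρ t) =
      (∫⁻ x, ENNReal.ofReal (x ^ t) ∂ρ).toReal⁻¹ * ∫ x, (max x 0) ^ t * F x ∂ρ := by
  rw [sizeBiased, integral_smul_measure, ENNReal.toReal_inv, smul_eq_mul]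
  congr 1
  have hwd : ρ.withDensity (fun x => ENNReal.ofReal (x ^ t)) =
      ρ.withDensity fun x => ((((max x 0) ^ t).toNNReal : ℝ≥0) : ℝ≥0∞) := by
    refine withDensity_congr_ae ?_
    filter_upwards [ofReal_rpow_ae_eq ρ hsupp t] with x hx
    rw [hx]; rfl
  rw [hwd, integral_withDensity_eq_integral_smul (by fun_prop) F]
  refine integral_congr_ae (ae_of_all _ fun x => ?_)
  show ((max x 0) ^ t).toNNReal • F x = (max x 0) ^ t * F x
  rw [NNReal.smul_def, smul_eq_mul, Real.coe_toNNReal _ (Real.rpow_nonneg (le_max_right x 0) t)]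

theorem sizeBiased_tendsto_of_tendsto (μ : ℕ → Measure ℝ) (μinf : Measure ℝ)
    [∀ n, IsProbabilityMeasure (μ n)] [IsProbabilityMeasure μinf]
    (hsupp : ∀ n, μ n {x : ℝ | x < 0} = 0) (hsuppinf : μinf {x : ℝ | x < 0} = 0)
    (hnonnull : μinf (Ioi (0 : ℝ)) ≠ 0)
    {l₀ : ℝ} (hl₀ : 0 < l₀)
    (hdom : ∀ᶠ n in atTop, ∃ l > l₀, ∫⁻ x, ENNReal.ofReal (x ^ l) ∂(μ n) < ⊤)
    (hdominf : ∃ l > l₀, ∫⁻ x, ENNReal.ofReal (x ^ l) ∂μinf < ⊤)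
    (hweak : ∀ F : BoundedContinuousFunction ℝ ℝ,
      Tendsto (fun n => ∫ x, F x ∂(μ n)) atTop (𝓝 (∫ x, F x ∂μinf)))
    (hmom : Tendsto (fun n => (∫⁻ x, ENNReal.ofReal (x ^ l₀) ∂(μ n)).toReal) atTop
      (𝓝 (∫⁻ x, ENNReal.ofReal (x ^ l₀) ∂μinf).toReal)) :
    ∀ l : ℝ, 0 ≤ l → l ≤ l₀ → ∀ F : BoundedContinuousFunction ℝ ℝ,
      Tendsto (fun n => ∫ x, F x ∂(sizeBiased (μ n) l)) atTop
        (𝓝 (∫ x, F x ∂(sizeBiased μinf l))) := by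
  intro l hl0 hll F
  set g : ℝ → ℝ := fun x => 1 + (max x 0) ^ l₀ with hgdef
  have hgc : Continuous g :=
    continuous_const.add ((continuous_id.max continuous_const).rpow_const fun x => Or.inr hl₀.le)
  have hg1 : ∀ x, 1 ≤ g x := fun x => by
    have := Real.rpow_nonneg (le_max_right x 0) l₀
    simp only [hgdef]; linarith
  have hg0 : ∀ x, 0 ≤ g x := fun x => le_trans zero_le_one (hg1 x)
  obtain ⟨s, hs, hsfin⟩ := hdominf
  have mfinf := moment_facts μinf hsuppinf hl₀.le hs.le hsfin
  have mfinf_l := moment_facts μinf hsuppinf hl0 (hll.trans hs.le) hsfin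
  have hgint : Integrable g μinf := (integrable_const 1).add mfinf.2.1
  have hev : ∀ᶠ n in atTop,
      (Integrable (fun x => (max x 0) ^ l₀) (μ n) ∧
        ∫ x, (max x 0) ^ l₀ ∂(μ n) = (∫⁻ x, ENNReal.ofReal (x ^ l₀) ∂(μ n)).toReal) ∧
      (Integrable (fun x => (max x 0) ^ l) (μ n) ∧
        ∫ x, (max x 0) ^ l ∂(μ n) = (∫⁻ x, ENNReal.ofReal (x ^ l) ∂(μ n)).toReal) := by
    filter_upwards [hdom] with n hn
    obtain ⟨s', hs', hfin'⟩ := hn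
    obtain ⟨-, b, c⟩ := moment_facts (μ n) (hsupp n) hl₀.le hs'.le hfin'
    obtain ⟨-, e, f⟩ := moment_facts (μ n) (hsupp n) hl0 (hll.trans hs'.le) hfin'
    exact ⟨⟨b, c⟩, ⟨e, f⟩⟩
  have hgformula : ∀ (ρ : Measure ℝ) [IsProbabilityMeasure ρ],
      Integrable (fun x => (max x 0) ^ l₀) ρ →
      ∫ x, g x ∂ρ = 1 + ∫ x, (max x 0) ^ l₀ ∂ρ := by
    intro ρ _ hi
    simp only [hgdef]
    rw [integral_add (integrable_const 1) hi, integral_const]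
    simp
  have hmomg : Tendsto (fun n => ∫ x, g x ∂(μ n)) atTop (𝓝 (∫ x, g x ∂μinf)) := by
    rw [hgformula μinf mfinf.2.1, mfinf.2.2]
    refine Tendsto.congr' ?_ (hmom.const_add 1)
    filter_upwards [hev] with n hn
    rw [hgformula (μ n) hn.1.1, hn.1.2]
  set h : ℝ → ℝ := fun x => (max x 0) ^ l / g x with hhdef
  have hgpos : ∀ x, 0 < g x := fun x => lt_of_lt_of_le one_pos (hg1 x)
  have hhc : Continuous h :=
    ((continuous_id.max continuous_const).rpow_const fun x => Or.inr hl0).div hgc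
      fun x => (hgpos x).ne'
  have hpl0 : ∀ x : ℝ, 0 ≤ (max x 0) ^ l := fun x => Real.rpow_nonneg (le_max_right x 0) l
  have hhb : ∀ x, |h x| ≤ 1 := by
    intro x
    rw [hhdef]
    rw [abs_of_nonneg (div_nonneg (hpl0 x) (hg0 x)), div_le_one (hgpos x)]
    exact rpow_le_one_add (le_max_right x 0) hl0 hll
  have hhg : ∀ x, h x * g x = (max x 0) ^ l := fun x => div_mul_cancel₀ _ (hgpos x).ne'
  have hgev : ∀ᶠ n in atTop, Integrable g (μ n) := by
    filter_upwards [hev] with n hn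
    exact (integrable_const 1).add hn.1.1
  have T1 := trunc_lemma μ μinf g hgc hg0 hgint hgev hweak hmomg h hhc 1 zero_le_one hhb
  have T2 := trunc_lemma μ μinf g hgc hg0 hgint hgev hweak hmomg (fun x => F x * h x)
    (F.continuous.mul hhc) ‖F‖ (norm_nonneg F) (fun x => by
      rw [abs_mul]
      calc |F x| * |h x| ≤ ‖F‖ * 1 :=
            mul_le_mul (by simpa [Real.norm_eq_abs] using F.norm_coe_le_norm x) (hhb x)
              (abs_nonneg _) (norm_nonneg F)
        _ = ‖F‖ := mul_one _)
  simp_rw [hhg] at T1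
  have hFhg : ∀ x, F x * h x * g x = (max x 0) ^ l * F x := fun x => by
    rw [mul_assoc, hhg x]; ring
  simp_rw [hFhg] at T2
  have hcne : (∫⁻ x, ENNReal.ofReal (x ^ l) ∂μinf) ≠ 0 := by
    refine ((lintegral_pos_iff_support (by fun_prop)).mpr ?_).ne'
    refine lt_of_lt_of_le (pos_iff_ne_zero.mpr hnonnull) (measure_mono fun x hx => ?_)
    have hxpos : (0:ℝ) < x := hx
    simp only [Function.mem_support, ne_eq, ENNReal.ofReal_eq_zero, not_le]
    exact Real.rpow_pos_of_pos hxpos l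
  have hcpos : 0 < (∫⁻ x, ENNReal.ofReal (x ^ l) ∂μinf).toReal :=
    ENNReal.toReal_pos hcne mfinf_l.1
  have hm0 : ∫ x, (max x 0) ^ l ∂μinf ≠ 0 := by rw [mfinf_l.2.2]; exact hcpos.ne'
  have heq : ∀ᶠ n in atTop, ∫ x, F x ∂(sizeBiased (μ n) l) =
      (∫ x, (max x 0) ^ l ∂(μ n))⁻¹ * ∫ x, (max x 0) ^ l * F x ∂(μ n) := by
    filter_upwards [hev] with n hn
    rw [sizeBiased_integral (μ n) (hsupp n) l F, hn.2.2]
  rw [sizeBiased_integral μinf hsuppinf l F, ← mfinf_l.2.2]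
  refine Tendsto.congr' (by filter_upwards [heq] with n hn using hn.symm) ?_
  exact (T1.inv₀ hm0).mul T2
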